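/- Let g(s) = Σ_{v=0}^k binom(k,v)(−1)^v (v−s)_+^{H−1/β} with parameters H ∈ (0,1), β ∈ (0,2], and order of differencing k ∈ N satisfying k > H + 1/β. Then there is a constant C such that |g(s)| ≤ C |s|^{H − k − 1/β} for all s ≤ −1. -/

import Mathlib

noncomputable def stmt6Fk (k : ℕ) (α : ℝ) (x : ℝ) : ℝ :=
  ∑ v ∈ Finset.range (k + 1), (k.choose v : ℝ) * (-1 : ℝ) ^ v * (x + v) ^ α

lemma stmt6Fk_succ (k : ℕ) (α x : ℝ) :
    stmt6Fk (k + 1) α x = stmt6Fk k α x - stmt6Fk k α (x + 1) := by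
  unfold stmt6Fk
  rw [Finset.sum_range_succ' (fun v => (((k+1).choose v : ℝ)) * (-1:ℝ)^v * (x + v) ^ α) (k+1)]
  have h1 : ∀ v ∈ Finset.range (k+1),
      (((k+1).choose (v+1) : ℝ)) * (-1:ℝ)^(v+1) * (x + ((v+1:ℕ):ℝ)) ^ α
        = -((k.choose v : ℝ) * (-1:ℝ)^v * ((x+1) + v) ^ α)
          + (k.choose (v+1) : ℝ) * (-1:ℝ)^(v+1) * (x + ((v+1:ℕ):ℝ)) ^ α := by
    intro v _
    have hb : x + ((v:ℝ)+1) = (x+1) + v := by ring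
    rw [Nat.choose_succ_succ]
    push_cast
    rw [hb]
    ring
  rw [Finset.sum_congr rfl h1]
  rw [Finset.sum_add_distrib]
  have h2 : ∑ v ∈ Finset.range (k+1),
      (k.choose (v+1) : ℝ) * (-1:ℝ)^(v+1) * (x + ((v+1:ℕ):ℝ)) ^ α
      = ∑ v ∈ Finset.range (k+1), (k.choose v : ℝ) * (-1:ℝ)^v * (x + v) ^ α
        - (x + ((0:ℕ):ℝ)) ^ α := by
    rw [Finset.sum_range_succ]
    rw [Finset.sum_range_succ' (fun v => (k.choose v : ℝ) * (-1:ℝ)^v * (x + v) ^ α) k]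
    simp [Nat.choose_succ_self]
  rw [h2]
  have h3 : ∑ v ∈ Finset.range (k+1), -((k.choose v : ℝ) * (-1:ℝ)^v * ((x+1) + v) ^ α)
      = -∑ v ∈ Finset.range (k+1), (k.choose v : ℝ) * (-1:ℝ)^v * ((x+1) + v) ^ α := by
    rw [Finset.sum_neg_distrib]
  rw [h3]
  simp
  ring

lemma stmt6Fk_hasDerivAt (k : ℕ) (α : ℝ) (t : ℝ) (ht : 0 < t) :
    HasDerivAt (stmt6Fk k α) (α * stmt6Fk k (α - 1) t) t := by
  have h : HasDerivAt (stmt6Fk k α)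
      (∑ v ∈ Finset.range (k+1),
        (k.choose v : ℝ) * (-1:ℝ)^v * (α * (t + v) ^ (α - 1) * 1)) t := by
    apply HasDerivAt.fun_sum
    intro v _
    have hv : (0:ℝ) < t + v := by positivity
    simpa using (((hasDerivAt_id t).add_const (v:ℝ)).rpow_const
      (Or.inl hv.ne')).const_mul ((k.choose v : ℝ) * (-1:ℝ)^v)
  convert h using 1
  unfold stmt6Fk
  rw [Finset.mul_sum]
  exact Finset.sum_congr rfl (fun v _ => by ring)

lemma stmt6Fk_continuousOn (k : ℕ) (α : ℝ) :
    ContinuousOn (stmt6Fk k α) (Set.Ioi (0:ℝ)) := by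
  unfold stmt6Fk
  apply continuousOn_finset_sum
  intro v _
  apply ContinuousOn.mul continuousOn_const
  apply ContinuousOn.rpow_const (continuousOn_id.add continuousOn_const)
  intro t ht
  left
  have : (0:ℝ) < t + v := by
    have := Set.mem_Ioi.mp ht
    positivity
  exact this.ne'

lemma stmt6Fk_bound (k : ℕ) (α : ℝ) :
    ∃ C : ℝ, 0 < C ∧ ∀ x : ℝ, 1 ≤ x → |stmt6Fk k α x| ≤ C * x ^ (α - k) := by
  induction k generalizing α with
  | zero =>
    refine ⟨1, one_pos, fun x hx => ?_⟩
    have hx0 : (0:ℝ) < x := lt_of_lt_of_le one_pos hx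
    have : stmt6Fk 0 α x = x ^ α := by
      unfold stmt6Fk; simp
    rw [this, abs_of_nonneg (Real.rpow_nonneg hx0.le α)]
    simp
  | succ k ih =>
    obtain ⟨C, hC, hB⟩ := ih (α - 1)
    set e : ℝ := α - 1 - k with he
    refine ⟨(|α| + 1) * C * 2 ^ |e|, by positivity, fun x hx => ?_⟩
    have hx0 : (0:ℝ) < x := lt_of_lt_of_le one_pos hx
    -- FTC
    have hftc : stmt6Fk k α (x+1) - stmt6Fk k α x
        = ∫ t in x..(x+1), α * stmt6Fk k (α-1) t := by
      apply (intervalIntegral.integral_eq_sub_of_hasDerivAt ?_ ?_).symm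
      · intro t ht
        rw [Set.uIcc_of_le (by linarith)] at ht
        exact stmt6Fk_hasDerivAt k α t (by have := ht.1; linarith)
      · apply ContinuousOn.intervalIntegrable
        apply ContinuousOn.mul continuousOn_const
        apply (stmt6Fk_continuousOn k (α-1)).mono
        rw [Set.uIcc_of_le (by linarith)]
        intro t ht
        exact Set.mem_Ioi.mpr (by have := ht.1; linarith)
    -- rewrite via Pascal
    have hpas : stmt6Fk (k+1) α x = -(stmt6Fk k α (x+1) - stmt6Fk k α x) := by
      rw [stmt6Fk_succ]; ring
    rw [hpas, abs_neg, hftc]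
    -- bound the integral
    have hxe : (0:ℝ) ≤ x ^ e := Real.rpow_nonneg hx0.le e
    have hM : ∀ t ∈ Set.uIoc x (x+1),
        ‖α * stmt6Fk k (α-1) t‖ ≤ (|α| + 1) * C * 2 ^ |e| * x ^ e := by
      intro t ht
      rw [Set.uIoc_of_le (by linarith)] at ht
      have ht1 : x < t := ht.1
      have ht2 : t ≤ x + 1 := ht.2
      have htx : (1:ℝ) ≤ t := by linarith
      have ht0 : (0:ℝ) < t := by linarith
      have hb1 : |stmt6Fk k (α-1) t| ≤ C * t ^ (α - 1 - k) := hB t htx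
      have hb2 : t ^ e ≤ 2 ^ |e| * x ^ e := by
        rcases le_or_gt 0 e with hep | hen
        · have h2x : t ≤ 2 * x := by linarith
          calc t ^ e ≤ (2 * x) ^ e := Real.rpow_le_rpow ht0.le h2x hep
            _ = 2 ^ e * x ^ e := Real.mul_rpow (by norm_num) hx0.le
            _ ≤ 2 ^ |e| * x ^ e := by rw [abs_of_nonneg hep]
        · calc t ^ e ≤ x ^ e := Real.rpow_le_rpow_of_nonpos hx0 ht1.le hen.le
            _ ≤ 2 ^ |e| * x ^ e := by
                have : (1:ℝ) ≤ 2 ^ |e| := Real.one_le_rpow (by norm_num) (abs_nonneg e)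
                nlinarith
      rw [Real.norm_eq_abs, abs_mul]
      calc |α| * |stmt6Fk k (α-1) t| ≤ |α| * (C * t ^ e) := by
            apply mul_le_mul_of_nonneg_left _ (abs_nonneg α)
            rw [he]; exact hb1
        _ ≤ |α| * (C * (2 ^ |e| * x ^ e)) := by
            apply mul_le_mul_of_nonneg_left _ (abs_nonneg α)
            exact mul_le_mul_of_nonneg_left hb2 hC.le
        _ ≤ (|α| + 1) * (C * (2 ^ |e| * x ^ e)) := by
            have h4 : (0:ℝ) ≤ C * (2 ^ |e| * x ^ e) := by positivity
            exact mul_le_mul_of_nonneg_right (by linarith [abs_nonneg α]) h4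
        _ = (|α| + 1) * C * 2 ^ |e| * x ^ e := by ring
    have hnorm := intervalIntegral.norm_integral_le_of_norm_le_const hM
    rw [Real.norm_eq_abs] at hnorm
    have hexp : x ^ e = x ^ (α - ((k:ℕ)+1 : ℕ)) := by
      congr 1
      push_cast
      ring
    calc |∫ t in x..(x+1), α * stmt6Fk k (α-1) t|
        ≤ (|α| + 1) * C * 2 ^ |e| * x ^ e * |x + 1 - x| := hnorm
      _ = (|α| + 1) * C * 2 ^ |e| * x ^ (α - ((k:ℕ)+1 : ℕ)) := by
          rw [hexp]; simp

theorem stmt6 (H β : ℝ) (hH : H ∈ Set.Ioo (0:ℝ) 1) (hβ : β ∈ Set.Ioc (0:ℝ) 2)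
    (k : ℕ) (hk : H + 1 / β < (k : ℝ)) :
    ∃ C : ℝ, 0 < C ∧ ∀ s : ℝ, s ≤ -1 →
      |∑ v ∈ Finset.range (k + 1),
          (k.choose v : ℝ) * (-1 : ℝ) ^ v * max ((v : ℝ) - s) 0 ^ (H - 1 / β)|
        ≤ C * |s| ^ (H - (k : ℝ) - 1 / β) := by
  obtain ⟨C, hC, hB⟩ := stmt6Fk_bound k (H - 1 / β)
  refine ⟨C, hC, fun s hs => ?_⟩
  have hs1 : (1:ℝ) ≤ -s := by linarith
  have hsum : (∑ v ∈ Finset.range (k + 1),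
      (k.choose v : ℝ) * (-1 : ℝ) ^ v * max ((v : ℝ) - s) 0 ^ (H - 1 / β))
      = stmt6Fk k (H - 1 / β) (-s) := by
    unfold stmt6Fk
    refine Finset.sum_congr rfl fun v _ => ?_
    have h0 : (0:ℝ) ≤ (v:ℝ) - s := by
      have : (0:ℝ) ≤ (v:ℝ) := Nat.cast_nonneg v
      linarith
    rw [max_eq_left h0, show (v:ℝ) - s = -s + (v:ℝ) by ring]
  rw [hsum, abs_of_neg (by linarith : s < 0),
    show H - (k:ℝ) - 1 / β = (H - 1 / β) - (k:ℝ) by ring]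
  exact hB (-s) hs1
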